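/- Let p be an odd prime and G = ℤ/p × ℤ/p act trivially on ℤ/p. Then Ш²_ω(G, ℤ/p) := ⋂_{g∈G} Ker[H²(G, ℤ/p) → H²(⟨g⟩, ℤ/p)] is isomorphic to ℤ/p. -/

import Mathlib

open groupCohomology

section Helper

variable {k G G' : Type} [CommRing k] [Group G] [Group G']

/-- Restriction of a representation along a group homomorphism. -/
noncomputable def resRep (φ : G' →* G) (A : Rep.{0} k G) : Rep.{0} k G' := Rep.of (A.ρ.comp φ)

/-- The old `groupCohomology.twoCoboundaries`: 2-coboundaries as a submodule of 2-cocycles. -/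
def twoCoboundaries (A : Rep.{0} k G) : Submodule k (cocycles₂ A) :=
  LinearMap.range ((d₁₂ A).hom.codRestrict (cocycles₂ A) fun c => d₁₂_apply_mem_cocycles₂ c)

theorem mem_twoCoboundaries_iff {A : Rep.{0} k G} (f : cocycles₂ A) : f ∈ twoCoboundaries A ↔
    ∃ x : G → A, ∀ g h : G, A.ρ g (x h) - x (g * h) + x g = f (g, h) := by
  constructor
  · rintro ⟨x, hx⟩
    exact ⟨x, fun g h => congrFun (congrArg Subtype.val hx) (g, h)⟩
  · rintro ⟨x, hx⟩
    exact ⟨x, Subtype.ext (funext fun g => hx g.1 g.2)⟩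

/-- The old `oldH2`: 2-cocycles modulo 2-coboundaries. -/
abbrev oldH2 (A : Rep.{0} k G) : ModuleCat k := ModuleCat.of k (cocycles₂ A ⧸ twoCoboundaries A)

/-- Restriction of 2-cocycles along a group homomorphism. -/
noncomputable def resTwoCocycles (φ : G' →* G) (A : Rep.{0} k G) :
    cocycles₂ A →ₗ[k] cocycles₂ (resRep φ A) where
  toFun f := ⟨fun p => f.1 (φ p.1, φ p.2), by
      refine (mem_cocycles₂_iff _).2 ?_
      intro g h j
      have := (mem_cocycles₂_iff (A := A) f.1).1 f.2 (φ g) (φ h) (φ j)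
      simp only [map_mul]
      exact this⟩
  map_add' f g := rfl
  map_smul' r f := rfl

/-- The restriction map on second group cohomology along a group homomorphism. -/
noncomputable def resH2 (φ : G' →* G) (A : Rep.{0} k G) :
    oldH2 A →ₗ[k] oldH2 (resRep φ A) :=
  Submodule.mapQ _ _ (resTwoCocycles φ A) (by
    intro f hf
    rw [Submodule.mem_comap, mem_twoCoboundaries_iff]
    rw [mem_twoCoboundaries_iff] at hf
    obtain ⟨x, hx⟩ := hf
    refine ⟨fun g' => x (φ g'), fun g h => ?_⟩
    have := hx (φ g) (φ h)
    simp only [map_mul]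
    exact this)

/-- `Ш²_ω(G, A)`: classes in `H²(G, A)` restricting to `0` on every cyclic subgroup. -/
noncomputable def Sha2 (A : Rep.{0} k G) : Submodule k (oldH2 A) :=
  ⨅ g : G, LinearMap.ker (resH2 (Subgroup.zpowers g).subtype A)

end Helper

/- ### Auxiliary development -/

open Finset Multiplicative

section Generic
variable {G : Type} [CommGroup G] {M : Type} [CommRing M]

/-- Cocycle identity for a trivial action. -/
def IsC (f : G → G → M) : Prop := ∀ g h j : G, f (g*h) j + f g h = f h j + f g (h*j)

variable {f : G → G → M}

lemma c_one_left (hf : IsC f) (h : G) : f 1 h = f 1 1 := by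
  have := hf 1 1 h; simpa using this.symm

lemma c_one_right (hf : IsC f) (g : G) : f g 1 = f 1 1 := by
  simpa using hf g 1 1

lemma c_sum (hf : IsC f) (u g : G) (n : ℕ) :
    f u (g ^ n) + ∑ i ∈ range n, f (g ^ i) g = f u 1 + ∑ i ∈ range n, f (u * g ^ i) g := by
  induction n with
  | zero => simp
  | succ n ih =>
    have key := hf u (g ^ n) g
    rw [← pow_succ] at key
    rw [sum_range_succ, sum_range_succ]
    linear_combination ih - key

lemma c_loop (hf : IsC f) (u g : G) (n : ℕ) (hg : g ^ n = 1) :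
    ∑ i ∈ range n, f (u * g ^ i) g = ∑ i ∈ range n, f (g ^ i) g := by
  have h2 := c_sum hf u g n
  rw [hg] at h2
  exact (add_left_cancel h2).symm

lemma b_mul (hf : IsC f) (g h k : G) :
    (f (g*h) k - f k (g*h)) = (f g k - f k g) + (f h k - f k h) := by
  have h1 := hf g h k
  have h2 := hf k g h
  have h3 := hf g k h
  rw [mul_comm k g] at h2
  rw [mul_comm k h] at h3
  linear_combination h1 + h2 - h3

lemma b_one (hf : IsC f) (h : G) : f 1 h - f h 1 = 0 := by
  simp [c_one_left hf h, c_one_right hf h]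

lemma b_pow (hf : IsC f) (g h : G) (n : ℕ) :
    f (g ^ n) h - f h (g ^ n) = n • (f g h - f h g) := by
  induction n with
  | zero => simpa using b_one hf h
  | succ n ih =>
    rw [pow_succ, b_mul hf, ih, succ_nsmul]

lemma c_symm (hf : IsC f) (e₁ e₂ : G)
    (hgen : ∀ g : G, ∃ m n : ℕ, g = e₁ ^ m * e₂ ^ n)
    (h12 : f e₁ e₂ = f e₂ e₁) : ∀ g h : G, f g h = f h g := by
  have key : ∀ (z : G) (h : G), (∃ m n : ℕ, z = e₁ ^ m * e₂ ^ n) →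
      (f e₁ h - f h e₁ = 0) → (f e₂ h - f h e₂ = 0) → f z h - f h z = 0 := by
    rintro z h ⟨m, n, rfl⟩ h1 h2
    rw [b_mul hf, b_pow hf, b_pow hf, h1, h2]
    simp
  intro g h
  have he1 : f e₁ h - f h e₁ = 0 := by
    have := key h e₁ (hgen h) (by simp) (by linear_combination -h12)
    linear_combination -this
  have he2 : f e₂ h - f h e₂ = 0 := by
    have := key h e₂ (hgen h) (by linear_combination h12) (by simp)
    linear_combination -this
  have := key g h (hgen g) he1 he2
  linear_combination this
end Generic

section Spec
variable {p : ℕ} [Fact p.Prime]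
local notation "Gp" => Multiplicative (ZMod p × ZMod p)

def ee1 : Multiplicative (ZMod p × ZMod p) := ofAdd (1, 0)
def ee2 : Multiplicative (ZMod p × ZMod p) := ofAdd (0, 1)

lemma e1_pow (m : ℕ) : (ee1 : Gp) ^ m = ofAdd ((m : ZMod p), 0) := by
  rw [ee1, ← ofAdd_nsmul]; norm_num
lemma e2_pow (m : ℕ) : (ee2 : Gp) ^ m = ofAdd (0, (m : ZMod p)) := by
  rw [ee2, ← ofAdd_nsmul]; norm_num
lemma e1_pow_val (c : ZMod p) : (ee1 : Gp) ^ c.val = ofAdd (c, 0) := by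
  rw [e1_pow, ZMod.natCast_rightInverse c]
lemma e2_pow_val (c : ZMod p) : (ee2 : Gp) ^ c.val = ofAdd (0, c) := by
  rw [e2_pow, ZMod.natCast_rightInverse c]
lemma canon (a b : ZMod p) :
    (ee1 : Gp) ^ a.val * ee2 ^ b.val = ofAdd (a, b) := by
  rw [e1_pow_val, e2_pow_val, ← ofAdd_add]; simp
lemma gen_word (g : Gp) : ∃ m n : ℕ, g = (ee1 : Gp) ^ m * ee2 ^ n := by
  refine ⟨(toAdd g).1.val, (toAdd g).2.val, ?_⟩
  rw [canon]; simp
lemma e1_pow_p : (ee1 : Gp) ^ p = 1 := by rw [e1_pow]; simp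
lemma e2_pow_p : (ee2 : Gp) ^ p = 1 := by rw [e2_pow]; simp
lemma mul_e1 (a b : ZMod p) : (ofAdd (a, b) : Gp) * ee1 = ofAdd (a + 1, b) := by
  rw [ee1, ← ofAdd_add]; simp
lemma mul_e2 (a b : ZMod p) : (ofAdd (a, b) : Gp) * ee2 = ofAdd (a, b + 1) := by
  rw [ee2, ← ofAdd_add]; simp
lemma e1_pow_succ_val (a : ZMod p) : (ee1 : Gp) ^ ((a + 1).val) = ee1 * ee1 ^ a.val := by
  rw [e1_pow_val, e1_pow_val, ee1, ← ofAdd_add]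
  norm_num [add_comm]

lemma val_succ_cases (b : ZMod p) :
    (b + 1).val = b.val + 1 ∨ (b.val + 1 = p ∧ (b + 1).val = 0) := by
  have h1 : (1 : ZMod p).val = 1 := ZMod.val_one p
  have hv := ZMod.val_add b 1
  rw [h1] at hv
  rcases lt_or_ge (b.val + 1) p with h | h
  · left; rw [hv, Nat.mod_eq_of_lt h]
  · right
    have hb := ZMod.val_lt b
    have hbp : b.val + 1 = p := by omega
    exact ⟨hbp, by rw [hv, hbp, Nat.mod_self]⟩

variable {f : Multiplicative (ZMod p × ZMod p) → Multiplicative (ZMod p × ZMod p) → ZMod p}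

/-- The primitive of a normalized symmetric cocycle with vanishing loop sums. -/
noncomputable def prim (f : Gp → Gp → ZMod p) (g : Gp) : ZMod p :=
  -(∑ i ∈ range (toAdd g).1.val, f ((ee1 : Gp) ^ i) ee1)
  - ∑ j ∈ range (toAdd g).2.val, f ((ee1 : Gp) ^ (toAdd g).1.val * ee2 ^ j) ee2

lemma prim_ofAdd (a b : ZMod p) : prim f (ofAdd (a, b)) =
    -(∑ i ∈ range a.val, f ((ee1 : Gp) ^ i) ee1)
    - ∑ j ∈ range b.val, f ((ee1 : Gp) ^ a.val * ee2 ^ j) ee2 := by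
  simp [prim]

lemma prim_one : prim f (1 : Gp) = 0 := by simp [prim]

lemma prim_step2 (hf : IsC f)
    (h2 : ∑ i ∈ range p, f ((ee2 : Gp) ^ i) ee2 = 0) (a b : ZMod p) :
    prim f (ofAdd (a, b) * ee2) = prim f (ofAdd (a, b)) - f (ofAdd (a, b)) ee2 := by
  have claim : ∑ j ∈ range ((b + 1).val), f ((ee1 : Gp) ^ a.val * ee2 ^ j) ee2
      = ∑ j ∈ range b.val, f ((ee1 : Gp) ^ a.val * ee2 ^ j) ee2 + f (ofAdd (a, b)) ee2 := by
    rcases val_succ_cases b with h | ⟨hp1, h⟩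
    · rw [h, sum_range_succ, canon]
    · rw [h]
      have hloop := c_loop hf ((ee1 : Gp) ^ a.val) ee2 p e2_pow_p
      rw [h2] at hloop
      have hsplit : ∑ j ∈ range p, f ((ee1 : Gp) ^ a.val * ee2 ^ j) ee2
          = ∑ j ∈ range b.val, f ((ee1 : Gp) ^ a.val * ee2 ^ j) ee2
            + f ((ee1 : Gp) ^ a.val * ee2 ^ b.val) ee2 := by
        rw [← sum_range_succ, hp1]
      rw [hloop, canon] at hsplit
      simpa using hsplit
  rw [mul_e2, prim_ofAdd, prim_ofAdd, claim]
  ring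

lemma prim_step1 (hf : IsC f) (hsym : ∀ g h : Gp, f g h = f h g)
    (h1 : ∑ i ∈ range p, f ((ee1 : Gp) ^ i) ee1 = 0) (a b : ZMod p) :
    prim f (ofAdd (a, b) * ee1) = prim f (ofAdd (a, b)) - f (ofAdd (a, b)) ee1 := by
  set u : Gp := (ee1 : Gp) ^ a.val with hu
  have claim1 : ∑ i ∈ range ((a + 1).val), f ((ee1 : Gp) ^ i) ee1
      = ∑ i ∈ range a.val, f ((ee1 : Gp) ^ i) ee1 + f u ee1 := by
    rcases val_succ_cases a with h | ⟨hp1, h⟩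
    · rw [h, sum_range_succ]
    · rw [h]
      have hsplit : ∑ i ∈ range p, f ((ee1 : Gp) ^ i) ee1
          = ∑ i ∈ range a.val, f ((ee1 : Gp) ^ i) ee1 + f u ee1 := by
        rw [← sum_range_succ, hp1]
      rw [h1] at hsplit
      simpa using hsplit
  have claim2 : ∑ j ∈ range b.val, f ((ee1 : Gp) ^ ((a+1).val) * ee2 ^ j) ee2
      = ∑ j ∈ range b.val, f (u * ee2 ^ j) ee2
        + (f ee1 (u * ee2 ^ b.val) - f ee1 u) := by
    have hterm : ∀ j : ℕ, f ((ee1 : Gp) ^ ((a+1).val) * ee2 ^ j) ee2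
        = f (u * ee2 ^ j) ee2 + (f ee1 (u * ee2 ^ (j+1)) - f ee1 (u * ee2 ^ j)) := by
      intro j
      have key := hf (ee1 : Gp) (u * ee2 ^ j) ee2
      rw [mul_assoc, ← pow_succ] at key
      rw [e1_pow_succ_val, mul_assoc]
      linear_combination key
    rw [sum_congr rfl (fun j _ => hterm j), sum_add_distrib,
      sum_range_sub (fun j => f (ee1 : Gp) (u * ee2 ^ j))]
    simp
  rw [mul_e1, prim_ofAdd, prim_ofAdd, claim1, claim2, ← hu, canon]
  have h3 : f u ee1 = f ee1 u := hsym u ee1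
  have h4 : f ee1 (ofAdd (a, b)) = f (ofAdd (a, b)) ee1 := hsym _ _
  linear_combination -h3 - h4

/-- Main construction: a normalized symmetric cocycle with vanishing loop sums
is a coboundary. -/
lemma prim_spec (hf : IsC f) (h0 : f 1 1 = 0) (hsym : ∀ g h : Gp, f g h = f h g)
    (h1 : ∑ i ∈ range p, f ((ee1 : Gp) ^ i) ee1 = 0)
    (h2 : ∑ i ∈ range p, f ((ee2 : Gp) ^ i) ee2 = 0) :
    ∀ g h : Gp, prim f h - prim f (g * h) + prim f g = f g h := by
  have hfact : Fact (1 < p) := ⟨(Fact.out (p := p.Prime)).one_lt⟩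
  have step2 : ∀ g : Gp, prim f (g * ee2) = prim f g - f g ee2 := by
    intro g
    have := prim_step2 hf h2 (toAdd g).1 (toAdd g).2
    simpa using this
  have step1 : ∀ g : Gp, prim f (g * ee1) = prim f g - f g ee1 := by
    intro g
    have := prim_step1 hf hsym h1 (toAdd g).1 (toAdd g).2
    simpa using this
  set r : Gp → Gp → ZMod p := fun g h => f g h - (prim f h - prim f (g * h) + prim f g)
    with hr
  have hrc : IsC r := by
    intro g h j
    have := hf g h j
    simp only [hr]
    rw [mul_assoc g h j]
    linear_combination this
  have hr1 : ∀ g : Gp, r g 1 = 0 := by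
    intro g
    simp only [hr]
    rw [mul_one, c_one_right hf, h0, prim_one]
    ring
  have hre1 : ∀ g : Gp, r g ee1 = 0 := by
    intro g
    simp only [hr]
    rw [step1 g]
    have hxe1 : prim f (ee1 : Gp) = 0 := by
      rw [ee1, prim_ofAdd]
      have : ((1 : ZMod p)).val = 1 := ZMod.val_one p
      rw [this]
      simp [c_one_left hf, h0]
    rw [hxe1]
    ring
  have hre2 : ∀ g : Gp, r g ee2 = 0 := by
    intro g
    simp only [hr]
    rw [step2 g]
    have hxe2 : prim f (ee2 : Gp) = 0 := by
      rw [ee2, prim_ofAdd]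
      have h1' : ((1 : ZMod p)).val = 1 := ZMod.val_one p
      have h0' : ((0 : ZMod p)).val = 0 := ZMod.val_zero
      rw [h1', h0']
      simp [c_one_left hf, h0]
    rw [hxe2]
    ring
  have prop2 : ∀ g h : Gp, r g (h * ee2) = r g h := by
    intro g h
    have := hrc g h ee2
    rw [hre2 (g * h), hre2 h] at this
    linear_combination -this
  have prop1 : ∀ g h : Gp, r g (h * ee1) = r g h := by
    intro g h
    have := hrc g h ee1
    rw [hre1 (g * h), hre1 h] at this
    linear_combination -this
  have main : ∀ (m n : ℕ) (g : Gp), r g ((ee1 : Gp) ^ m * ee2 ^ n) = 0 := by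
    intro m n g
    induction n with
    | zero =>
      simp only [pow_zero, mul_one]
      induction m with
      | zero => simpa using hr1 g
      | succ m ihm => rw [pow_succ, prop1 g _]; exact ihm
    | succ n ihn =>
      rw [pow_succ, ← mul_assoc, prop2 g _]
      exact ihn
  intro g h
  obtain ⟨m, n, rfl⟩ := gen_word h
  have := main m n g
  simp only [hr] at this
  linear_combination -this

end Spec

section Bridge
variable {p : ℕ} [Fact p.Prime]
local notation "Gp" => Multiplicative (ZMod p × ZMod p)

/-- The trivial representation of `ℤ/p × ℤ/p` on `ℤ/p`. -/
noncomputable abbrev AA (p : ℕ) : Rep.{0} ℤ (Multiplicative (ZMod p × ZMod p)) :=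
  Rep.trivial ℤ (Multiplicative (ZMod p × ZMod p)) (ZMod p)

/-- Evaluation of a 2-cocycle, valued in `ZMod p`. -/
noncomputable def ev (F : cocycles₂ (AA p)) (g h : Gp) : ZMod p := F.1 (g, h)

lemma ev_add (F F' : cocycles₂ (AA p)) (g h : Gp) :
    ev (F + F') g h = ev F g h + ev F' g h := rfl

lemma ev_smul (z : ℤ) (F : cocycles₂ (AA p)) (g h : Gp) :
    ev (z • F) g h = z • ev F g h := rfl

lemma cocycle_isC (F : cocycles₂ (AA p)) : IsC (ev F) := by
  intro g h j
  have := (mem_cocycles₂_iff (A := AA p) F.1).1 F.2 g h j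
  rw [Rep.trivial_ρ_apply] at this
  exact this

/-- If a function is a "coboundary" on `⟨g⟩`, the loop sum along `g` vanishes. -/
lemma loopsum_eq_zero (f : Gp → Gp → ZMod p) (g : Gp) (hgp : g ^ p = 1)
    (x : ↥(Subgroup.zpowers g) → ZMod p)
    (hx : ∀ u v : ↥(Subgroup.zpowers g), x v - x (u * v) + x u = f (u : Gp) (v : Gp)) :
    ∑ i ∈ range p, f (g ^ i) g = 0 := by
  set w : ↥(Subgroup.zpowers g) := ⟨g, Subgroup.mem_zpowers g⟩ with hw
  have hcoe : ∀ i : ℕ, ((w ^ i : ↥(Subgroup.zpowers g)) : Gp) = g ^ i := by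
    intro i; rw [hw]; simp
  have hterm : ∀ i : ℕ, f (g ^ i) g = x w + (x (w ^ i) - x (w ^ (i+1))) := by
    intro i
    have := hx (w ^ i) w
    rw [hcoe i] at this
    have hcw : ((w : ↥(Subgroup.zpowers g)) : Gp) = g := rfl
    rw [hcw, ← pow_succ] at this
    linear_combination -this
  rw [sum_congr rfl (fun i _ => hterm i), sum_add_distrib,
    sum_range_sub' (fun i => x (w ^ i))]
  have hwp : w ^ p = w ^ 0 := by
    apply Subtype.ext
    rw [hcoe p, hcoe 0, hgp, pow_zero]
  rw [hwp, sum_const, card_range]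
  have hp0 : p • x w = 0 := by
    rw [nsmul_eq_mul, ZMod.natCast_self, zero_mul]
  rw [hp0]
  ring

/-- The anticommutator functional on 2-cocycles. -/
noncomputable def ell : cocycles₂ (AA p) →ₗ[ℤ] ZMod p where
  toFun F := ev F ee1 ee2 - ev F ee2 ee1
  map_add' F F' := by
    simp only [ev_add]; ring
  map_smul' z F := by
    simp only [ev_smul, RingHom.id_apply, smul_sub]

lemma ell_cob (F : cocycles₂ (AA p)) (hF : F ∈ twoCoboundaries (AA p)) : ell F = 0 := by
  rw [mem_twoCoboundaries_iff] at hF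
  obtain ⟨x, hx⟩ := hF
  have h1 : x ee2 - x (ee1 * ee2) + x ee1 = ev F ee1 ee2 := by
    have := hx ee1 ee2
    rw [Rep.trivial_ρ_apply] at this
    exact this
  have h2 : x ee1 - x (ee1 * ee2) + x ee2 = ev F ee2 ee1 := by
    have := hx ee2 ee1
    rw [Rep.trivial_ρ_apply, mul_comm ee2 ee1] at this
    exact this
  show ev F ee1 ee2 - ev F ee2 ee1 = 0
  rw [← h1, ← h2]
  ring

/-- The induced functional on `H²`. -/
noncomputable def Phi : oldH2 (AA p) →ₗ[ℤ] ZMod p :=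
  Submodule.liftQ (twoCoboundaries (AA p)) ell (fun F hF => ell_cob F hF)

lemma Phi_mk (F : cocycles₂ (AA p)) : Phi (Submodule.Quotient.mk F) = ell F :=
  rfl

lemma mem_sha2_iff (F : cocycles₂ (AA p)) :
    (Submodule.Quotient.mk F : oldH2 (AA p)) ∈ Sha2 (AA p) ↔
      ∀ g : Gp, resTwoCocycles (Subgroup.zpowers g).subtype (AA p) F
        ∈ twoCoboundaries (resRep (Subgroup.zpowers g).subtype (AA p)) := by
  rw [Sha2, Submodule.mem_iInf]
  refine forall_congr' fun g => ?_
  rw [LinearMap.mem_ker, resH2, Submodule.mapQ_apply, Submodule.Quotient.mk_eq_zero]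

end Bridge

section Main
variable {p : ℕ} [Fact p.Prime]
local notation "Gp" => Multiplicative (ZMod p × ZMod p)

lemma resRep_ρ_apply {G' : Type} [Group G'] (φ : G' →* Multiplicative (ZMod p × ZMod p))
    (u : G') (v : ZMod p) : (resRep φ (AA p)).ρ u v = v :=
  Rep.trivial_ρ_apply (φ u) v

lemma pow_p_eq_one (g : Gp) : g ^ p = 1 := by
  obtain ⟨m, n, rfl⟩ := gen_word g
  rw [mul_pow, ← pow_mul, ← pow_mul, mul_comm m p, mul_comm n p, pow_mul, pow_mul,
    e1_pow_p, e2_pow_p, one_pow, one_pow, one_mul]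

/-- Injectivity: a cocycle whose class lies in `Sha2` and is killed by `Phi` is a coboundary. -/
lemma sha2_phi_inj (F : cocycles₂ (AA p))
    (hS : (Submodule.Quotient.mk F : oldH2 (AA p)) ∈ Sha2 (AA p))
    (hphi : Phi (Submodule.Quotient.mk F) = 0) :
    (Submodule.Quotient.mk F : oldH2 (AA p)) = 0 := by
  rw [mem_sha2_iff] at hS
  have hf : IsC (ev F) := cocycle_isC F
  -- loop sums vanish
  have hloop : ∀ g : Gp, ∑ i ∈ range p, ev F (g ^ i) g = 0 := by
    intro g
    have hmem := hS g
    rw [mem_twoCoboundaries_iff] at hmem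
    obtain ⟨x, hx⟩ := hmem
    refine loopsum_eq_zero (ev F) g (pow_p_eq_one g) x ?_
    intro u v
    have h := hx u v
    erw [resRep_ρ_apply] at h
    exact h
  -- the pairing vanishes
  have h12 : ev F ee1 ee2 = ev F ee2 ee1 := by
    rw [Phi_mk] at hphi
    have : ev F ee1 ee2 - ev F ee2 ee1 = 0 := hphi
    linear_combination this
  have hsym := c_symm hf ee1 ee2 gen_word h12
  -- normalize
  set c : ZMod p := ev F 1 1 with hc
  set f' : Gp → Gp → ZMod p := fun g h => ev F g h - c with hf'def
  have hf' : IsC f' := by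
    intro g h j
    have := hf g h j
    simp only [hf'def]
    linear_combination this
  have h0' : f' 1 1 = 0 := by simp [hf'def, hc]
  have hsym' : ∀ g h : Gp, f' g h = f' h g := by
    intro g h; simp only [hf'def]; rw [hsym g h]
  have hsum : ∀ e : Gp, ∑ i ∈ range p, f' (e ^ i) e = 0 := by
    intro e
    simp only [hf'def]
    rw [sum_sub_distrib, hloop e, sum_const, card_range, nsmul_eq_mul, ZMod.natCast_self,
      zero_mul, zero_sub, neg_zero]
  have key := prim_spec hf' h0' hsym' (hsum ee1) (hsum ee2)
  rw [Submodule.Quotient.mk_eq_zero, mem_twoCoboundaries_iff]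
  refine ⟨fun g => prim f' g + c, fun g h => ?_⟩
  have hρ : (AA p).ρ g (prim f' h + c) = prim f' h + c := Rep.trivial_ρ_apply g _
  rw [hρ]
  show (prim f' h + c) - (prim f' (g * h) + c) + (prim f' g + c) = ev F g h
  have hk := key g h
  simp only [hf'def] at hk
  linear_combination hk

/-- The cup-product cocycle. -/
noncomputable def F0 : cocycles₂ (AA p) :=
  ⟨fun q => (toAdd q.1).1 * (toAdd q.2).2, by
    rw [mem_cocycles₂_iff]
    intro g h j
    rw [Rep.trivial_ρ_apply]
    show (toAdd (g * h)).1 * (toAdd j).2 + (toAdd g).1 * (toAdd h).2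
      = (toAdd h).1 * (toAdd j).2 + (toAdd g).1 * (toAdd (h * j)).2
    rw [toAdd_mul, toAdd_mul]
    show ((toAdd g).1 + (toAdd h).1) * (toAdd j).2 + _
      = _ + (toAdd g).1 * ((toAdd h).2 + (toAdd j).2)
    ring⟩

lemma ev_F0 (g h : Gp) : ev (F0 : cocycles₂ (AA p)) g h = (toAdd g).1 * (toAdd h).2 := rfl

lemma ell_F0 : ell (F0 : cocycles₂ (AA p)) = 1 := by
  show ev (F0 : cocycles₂ (AA p)) ee1 ee2 - ev F0 ee2 ee1 = 1
  rw [ev_F0, ev_F0]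
  simp [ee1, ee2]

lemma myTwo_ne_zero (hp : Odd p) : (2 : ZMod p) ≠ 0 := by
  have h := Fact.out (p := p.Prime)
  have h2 : ¬ (p ∣ 2) := by
    intro hd
    rcases (Nat.dvd_prime Nat.prime_two).1 hd with h1 | h1
    · exact h.one_lt.ne' h1
    · rw [h1] at hp; simp [Nat.odd_iff] at hp
  have : ((2:ℕ) : ZMod p) ≠ 0 := by
    rw [Ne, ZMod.natCast_eq_zero_iff]; exact h2
  simpa using this

lemma F0_mem_sha2 (hp : Odd p) :
    (Submodule.Quotient.mk (F0 : cocycles₂ (AA p)) : oldH2 (AA p))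
      ∈ Sha2 (AA p) := by
  rw [mem_sha2_iff]
  intro g
  rw [mem_twoCoboundaries_iff]
  refine ⟨fun u => -((toAdd (u : Gp)).1 * (toAdd (u : Gp)).2) * (2 : ZMod p)⁻¹,
    fun u v => ?_⟩
  rw [resRep_ρ_apply]
  have key : (toAdd (u : Gp)).1 * (toAdd (v : Gp)).2
      = (toAdd (v : Gp)).1 * (toAdd (u : Gp)).2 := by
    obtain ⟨m, hm⟩ := Subgroup.mem_zpowers_iff.mp u.2
    obtain ⟨n, hn⟩ := Subgroup.mem_zpowers_iff.mp v.2
    rw [← hm, ← hn, toAdd_zpow, toAdd_zpow]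
    show (m • (toAdd g).1) * (n • (toAdd g).2) = (n • (toAdd g).1) * (m • (toAdd g).2)
    rw [zsmul_eq_mul, zsmul_eq_mul, zsmul_eq_mul, zsmul_eq_mul]
    ring
  have hco : toAdd ((u : Gp) * (v : Gp)) = toAdd (u : Gp) + toAdd (v : Gp) := toAdd_mul _ _
  have h2inv : (2 : ZMod p) * (2 : ZMod p)⁻¹ = 1 := mul_inv_cancel₀ (myTwo_ne_zero hp)
  show -((toAdd (v : Gp)).1 * (toAdd (v : Gp)).2) * (2 : ZMod p)⁻¹
      - -((toAdd ((u * v : Subgroup.zpowers g) : Gp)).1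
          * (toAdd ((u * v : Subgroup.zpowers g) : Gp)).2) * (2 : ZMod p)⁻¹
      + -((toAdd (u : Gp)).1 * (toAdd (u : Gp)).2) * (2 : ZMod p)⁻¹
      = (toAdd (u : Gp)).1 * (toAdd (v : Gp)).2
  have hcoe : ((u * v : Subgroup.zpowers g) : Gp) = (u : Gp) * (v : Gp) := rfl
  rw [hcoe, hco]
  show -((toAdd (v : Gp)).1 * (toAdd (v : Gp)).2) * (2 : ZMod p)⁻¹
      - -(((toAdd (u : Gp)).1 + (toAdd (v : Gp)).1)
          * ((toAdd (u : Gp)).2 + (toAdd (v : Gp)).2)) * (2 : ZMod p)⁻¹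
      + -((toAdd (u : Gp)).1 * (toAdd (u : Gp)).2) * (2 : ZMod p)⁻¹
      = (toAdd (u : Gp)).1 * (toAdd (v : Gp)).2
  linear_combination (-(2 : ZMod p)⁻¹) * key
    + ((toAdd (u : Gp)).1 * (toAdd (v : Gp)).2) * h2inv

end Main

/-- Let `p` be an odd prime and `G = ℤ/p × ℤ/p` act trivially on `ℤ/p`. Then
`Ш²_ω(G, ℤ/p) = ⋂_{g∈G} Ker[H²(G, ℤ/p) → H²(⟨g⟩, ℤ/p)]` is isomorphic to `ℤ/p`. -/
theorem sha2_omega_p_sq_zmodp (p : ℕ) [Fact p.Prime] (hp : Odd p) :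
    Nonempty
      ((Sha2 (Rep.trivial ℤ (Multiplicative (ZMod p × ZMod p)) (ZMod p))) ≃ₗ[ℤ]
        ZMod p) := by
  let Ψ : ↥(Sha2 (AA p)) →ₗ[ℤ] ZMod p := (Phi (p := p)).comp (Sha2 (AA p)).subtype
  have hinj : Function.Injective Ψ := by
    rw [injective_iff_map_eq_zero]
    rintro ⟨cq, hc⟩ hs
    obtain ⟨F, rfl⟩ := Submodule.Quotient.mk_surjective _ cq
    have h0 := sha2_phi_inj F hc hs
    exact Subtype.ext h0
  have hsurj : Function.Surjective Ψ := by
    intro z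
    refine ⟨(z.val : ℤ) • ⟨Submodule.Quotient.mk (F0 : cocycles₂ (AA p)),
      F0_mem_sha2 hp⟩, ?_⟩
    rw [map_smul]
    have h1 : Ψ ⟨Submodule.Quotient.mk (F0 : cocycles₂ (AA p)), F0_mem_sha2 hp⟩ = 1 := by
      show Phi (Submodule.Quotient.mk (F0 : cocycles₂ (AA p))) = 1
      rw [Phi_mk, ell_F0]
    rw [h1]
    show (z.val : ℤ) • (1 : ZMod p) = z
    rw [zsmul_eq_mul, mul_one]
    push_cast
    exact ZMod.natCast_rightInverse z
  exact ⟨LinearEquiv.ofBijective Ψ ⟨hinj, hsurj⟩⟩
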